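/- arXiv:2212.11780 — 3 statements merged into one kernel-verified Lean document; each statement's English description precedes it below -/
import Mathlib

section
/- Let F be a free group with a basis containing two distinct elements e₁ and e₂. Then for all x, y ∈ F: (x = 1 or y = 1) if and only if all four commutators [xᵃ, yᵇ] for a ∈ {e₁, e₁⁻¹} and b ∈ {e₂, e₂⁻¹} are trivial, where xᵃ denotes the conjugate a⁻¹xa and [u,v] = u⁻¹v⁻¹uv. -/
set_option linter.unnecessarySimpa false

namespace MalcevAux
open FreeGroup

private lemma cons_mul_toWord [DecidableEq α] (t : α) (b : Bool) (z : FreeGroup α) :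
    (FreeGroup.mk [(t, b)] * z).toWord = FreeGroup.reduce ((t, b) :: z.toWord) := by
  conv_lhs => rw [← mk_toWord (x := z), mul_mk]
  rw [toWord_mk]
  rfl

private lemma of_eq_mk (t : α) : (FreeGroup.of t : FreeGroup α) = FreeGroup.mk [(t, true)] := rfl

private lemma inv_of_eq_mk (t : α) :
    (FreeGroup.of t : FreeGroup α)⁻¹ = FreeGroup.mk [(t, false)] := by
  rw [of_eq_mk, inv_mk]; rfl

private lemma invRev_cons (x : α × Bool) (L : List (α × Bool)) :
    invRev (x :: L) = invRev L ++ [(x.1, !x.2)] := by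
  simp [invRev]

/-- Key word lemma: anything commuting with a basis element is a power of it. -/
lemma commute_of_imp_zpow (t : α) (c : FreeGroup α)
    (h : Commute c (FreeGroup.of t)) : ∃ n : ℤ, c = FreeGroup.of t ^ n := by
  classical
  obtain ⟨N, hN⟩ : ∃ N, c.toWord.length ≤ N := ⟨_, le_refl _⟩
  induction N generalizing c with
  | zero =>
    have : c.toWord = [] := List.eq_nil_of_length_eq_zero (Nat.le_zero.mp hN)
    exact ⟨0, by simpa using (toWord_eq_nil_iff.mp this)⟩
  | succ N ih =>
    rcases hL : c.toWord with _ | ⟨⟨s, b⟩, tl⟩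
    · exact ⟨0, by simpa using (toWord_eq_nil_iff.mp hL)⟩
    by_cases hst : s = t
    · subst hst
      cases b with
      | true =>
        have htw : ((FreeGroup.of s)⁻¹ * c).toWord = tl := by
          rw [inv_of_eq_mk, cons_mul_toWord, hL]
          rw [show FreeGroup.reduce ((s, false) :: (s, true) :: tl)
              = _ from reduce.cons _]
          have : FreeGroup.reduce ((s, true) :: tl) = (s, true) :: tl := by
            rw [← hL]; exact reduce_toWord c
          rw [this]
          simp
        have hcomm : Commute ((FreeGroup.of s)⁻¹ * c) (FreeGroup.of s) :=
          ((Commute.refl (FreeGroup.of s)).inv_left).mul_left h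
        have hlen : ((FreeGroup.of s)⁻¹ * c).toWord.length ≤ N := by
          rw [htw]
          have := hN; rw [hL] at this; simpa using Nat.lt_succ_iff.mp (Nat.lt_of_lt_of_le (Nat.lt_succ_self _) this)
        obtain ⟨n, hn⟩ := ih _ hcomm hlen
        refine ⟨n + 1, ?_⟩
        have : c = FreeGroup.of s * ((FreeGroup.of s)⁻¹ * c) := by group
        rw [this, hn, zpow_add, zpow_one]; group
      | false =>
        have htw : (FreeGroup.of s * c).toWord = tl := by
          rw [of_eq_mk, cons_mul_toWord, hL]
          rw [show FreeGroup.reduce ((s, true) :: (s, false) :: tl)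
              = _ from reduce.cons _]
          have : FreeGroup.reduce ((s, false) :: tl) = (s, false) :: tl := by
            rw [← hL]; exact reduce_toWord c
          rw [this]
          simp
        have hcomm : Commute (FreeGroup.of s * c) (FreeGroup.of s) :=
          (Commute.refl (FreeGroup.of s)).mul_left h
        have hlen : (FreeGroup.of s * c).toWord.length ≤ N := by
          rw [htw]
          have := hN; rw [hL] at this; simpa using Nat.lt_succ_iff.mp (Nat.lt_of_lt_of_le (Nat.lt_succ_self _) this)
        obtain ⟨n, hn⟩ := ih _ hcomm hlen
        refine ⟨n - 1, ?_⟩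
        have : c = (FreeGroup.of s)⁻¹ * (FreeGroup.of s * c) := by group
        rw [this, hn, zpow_sub, zpow_one]; group
    · -- contradiction branch
      exfalso
      set d := (FreeGroup.of t)⁻¹ * c with hd_def
      have hd : d.toWord = (t, false) :: c.toWord := by
        rw [hd_def, inv_of_eq_mk, cons_mul_toWord]
        rw [show FreeGroup.reduce ((t, false) :: c.toWord) = _ from reduce.cons _]
        rw [reduce_toWord c, hL]
        simp [Ne.symm hst]
      have hdc : d * FreeGroup.of t = c := by
        rw [hd_def, mul_assoc, h.eq]; group
      have hcinv : c⁻¹ = (FreeGroup.of t)⁻¹ * d⁻¹ := by rw [← hdc]; group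
      have hMword : d⁻¹.toWord = invRev c.toWord ++ [(t, true)] := by
        rw [toWord_inv, hd, invRev_cons]
        rfl
      have hKey : invRev c.toWord = ((FreeGroup.of t)⁻¹ * d⁻¹).toWord := by
        rw [← hcinv, toWord_inv]
      rw [inv_of_eq_mk, cons_mul_toWord] at hKey
      set K := invRev c.toWord with hK_def
      have hKne : K ≠ [] := by
        rw [hK_def, hL]; simp [invRev]
      rcases hKcons : K with _ | ⟨k₀, K'⟩
      · exact hKne hKcons
      have hM : d⁻¹.toWord = k₀ :: (K' ++ [(t, true)]) := by
        rw [hMword, hKcons]; rfl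
      have hredM : FreeGroup.reduce (d⁻¹.toWord) = d⁻¹.toWord := reduce_toWord _
      have hred : FreeGroup.reduce ((t, false) :: d⁻¹.toWord) =
          if t = k₀.1 ∧ false = !k₀.2 then K' ++ [(t, true)]
          else (t, false) :: k₀ :: (K' ++ [(t, true)]) := by
        conv_lhs => rw [reduce.cons, hredM, hM]
      rw [hred] at hKey
      by_cases hcond : t = k₀.1 ∧ false = !k₀.2
      · rw [if_pos hcond] at hKey
        -- hKey : K = K' ++ [(t,true)]  (as lists, with K = k₀ :: K')
        have hlast : K.getLast? = some (t, true) := by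
          rw [hKcons] at hKey ⊢
          rw [hKey]
          simp
        have hlast2 : K.getLast? = some (s, !b) := by
          rw [hK_def, hL, invRev_cons]
          simp
        have h2 := hlast.symm.trans hlast2
        simp only [Option.some.injEq, Prod.mk.injEq] at h2
        exact hst h2.1.symm
      · rw [if_neg hcond] at hKey
        -- hKey : K = (t,false) :: k₀ :: K' ++ [(t,true)] : length contradiction
        have := congrArg List.length hKey
        rw [hKcons] at this
        simp at this

private lemma of_zpow_eq_one {α : Type*} (a : α) {k : ℤ}
    (h : (FreeGroup.of a : FreeGroup α) ^ k = 1) : k = 0 := by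
  have h2 := congrArg (FreeGroup.lift (fun _ : α => Multiplicative.ofAdd (1 : ℤ))) h
  simp only [map_zpow, map_one, FreeGroup.lift_apply_of] at h2
  have h3 := congrArg Multiplicative.toAdd h2
  simpa using h3

private lemma zpow_ne_zpow {β : Type*} {i j : β} (hij : i ≠ j) {m n : ℤ}
    (h : (FreeGroup.of i : FreeGroup β) ^ m = FreeGroup.of j ^ n) : m = 0 := by
  classical
  have h2 := congrArg
    (FreeGroup.lift (fun a : β => if a = i then Multiplicative.ofAdd (1 : ℤ) else 1)) h
  simp only [map_zpow, FreeGroup.lift_apply_of, if_pos rfl, if_neg hij.symm, one_zpow] at h2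
  have h3 := congrArg Multiplicative.toAdd h2
  simpa using h3

/-- The centralizer of a nontrivial element of a free group is infinite cyclic. -/
lemma centralizer_structure {β : Type*} (g : FreeGroup β) (hg : g ≠ 1) :
    ∃ w : FreeGroup β, Commute w g ∧ (∀ k : ℤ, w ^ k = 1 → k = 0) ∧
      ∀ u : FreeGroup β, Commute u g → ∃ n : ℤ, u = w ^ n := by
  classical
  set H := Subgroup.centralizer ({g} : Set (FreeGroup β)) with hH
  have hmem : ∀ u : FreeGroup β, u ∈ H ↔ Commute u g := by
    intro u
    rw [hH, Subgroup.mem_centralizer_singleton_iff, commute_iff_eq, eq_comm]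
  let e : H ≃* FreeGroup (IsFreeGroup.Generators H) := IsFreeGroup.toFreeGroup H
  have hgH : g ∈ H := (hmem g).2 (Commute.refl g)
  have hgH1 : (⟨g, hgH⟩ : H) ≠ 1 := fun hcon => hg (by simpa [Subtype.ext_iff] using hcon)
  have hc1 : e ⟨g, hgH⟩ ≠ 1 := fun hcon => hgH1 (by simpa using congrArg e.symm hcon)
  have hcent : ∀ v : FreeGroup (IsFreeGroup.Generators H), Commute (e ⟨g, hgH⟩) v := by
    intro v
    have h2 : Commute (((e.symm v : H) : FreeGroup β)) g := (hmem _).1 (e.symm v).2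
    have h3 : Commute (⟨g, hgH⟩ : H) (e.symm v) := Subtype.ext h2.symm.eq
    have h4 := congrArg e h3.eq
    simp only [_root_.map_mul] at h4
    exact (by simpa using h4 : e ⟨g, hgH⟩ * v = v * e ⟨g, hgH⟩)
  have hsub : ∀ i' j' : IsFreeGroup.Generators H, i' = j' := by
    intro i' j'
    by_contra hne
    obtain ⟨m, hm⟩ := commute_of_imp_zpow i' (e ⟨g, hgH⟩) (hcent (FreeGroup.of i'))
    obtain ⟨n, hn⟩ := commute_of_imp_zpow j' (e ⟨g, hgH⟩) (hcent (FreeGroup.of j'))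
    have hm0 : m = 0 := zpow_ne_zpow hne (hm.symm.trans hn)
    exact hc1 (by rw [hm, hm0, zpow_zero])
  have hnonempty : Nonempty (IsFreeGroup.Generators H) := by
    by_contra hemp
    rw [not_nonempty_iff] at hemp
    apply hc1
    rw [← FreeGroup.toWord_eq_nil_iff]
    cases hw : (e ⟨g, hgH⟩).toWord with
    | nil => rfl
    | cons a _ => exact (hemp.false a.1).elim
  obtain ⟨g₀⟩ := hnonempty
  have hall : ∀ v : FreeGroup (IsFreeGroup.Generators H),
      ∃ n : ℤ, v = FreeGroup.of g₀ ^ n := by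
    intro v
    apply commute_of_imp_zpow
    induction v using FreeGroup.induction_on with
    | C1 => exact Commute.one_left _
    | of a => exact (hsub a g₀) ▸ Commute.refl _
    | inv_of a h => exact h.inv_left
    | mul u v hu hv => exact hu.mul_left hv
  refine ⟨((e.symm (FreeGroup.of g₀) : H) : FreeGroup β), ?_, ?_, ?_⟩
  · exact (hmem _).1 (e.symm (FreeGroup.of g₀)).2
  · intro k hk
    have h2 : ((e.symm (FreeGroup.of g₀)) ^ k : H) = 1 := by
      apply Subtype.ext
      push_cast
      exact hk
    have h3 := congrArg e h2
    rw [map_zpow, _root_.map_one, MulEquiv.apply_symm_apply] at h3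
    exact of_zpow_eq_one g₀ h3
  · intro u hu
    have huH : u ∈ H := (hmem u).2 hu
    obtain ⟨n, hn⟩ := hall (e ⟨u, huH⟩)
    refine ⟨n, ?_⟩
    have h2 : (⟨u, huH⟩ : H) = (e.symm (FreeGroup.of g₀)) ^ n := by
      have := congrArg e.symm hn
      rw [MulEquiv.symm_apply_apply, map_zpow] at this
      exact this
    have h3 := congrArg (Subtype.val : H → FreeGroup β) h2
    push_cast at h3
    exact h3

lemma comm_trans {β : Type*} {g u v : FreeGroup β} (hg : g ≠ 1)
    (hu : Commute u g) (hv : Commute v g) : Commute u v := by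
  obtain ⟨w, -, -, hall⟩ := centralizer_structure g hg
  obtain ⟨m, rfl⟩ := hall u hu
  obtain ⟨n, rfl⟩ := hall v hv
  exact Commute.zpow_zpow (Commute.refl w) m n

lemma commute_of_commute_zpow {β : Type*} {u z : FreeGroup β} {c : ℤ}
    (hc : z ^ c ≠ 1) (h : Commute u (z ^ c)) : Commute u z := by
  obtain ⟨w, -, -, hall⟩ := centralizer_structure (z ^ c) hc
  obtain ⟨m, hm⟩ := hall u h
  obtain ⟨k, hk⟩ := hall z ((Commute.refl z).zpow_right c)
  rw [hm, hk]
  exact Commute.zpow_zpow (Commute.refl w) m k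

lemma conj_zpow_commute {β : Type*} {g z : FreeGroup β} {a c : ℤ}
    (h : g * z ^ a * g⁻¹ = z ^ c) (ha : z ^ a ≠ 1) (hg2 : g * g ≠ 1) :
    Commute g z := by
  have hc : z ^ c ≠ 1 := by
    intro hcon
    apply ha
    have h2 : z ^ a = g⁻¹ * (z ^ c) * g := by rw [← h]; group
    rw [h2, hcon]; group
  obtain ⟨w, hwza, hwinj, hall⟩ := centralizer_structure (z ^ a) ha
  obtain ⟨k, hk⟩ := hall z ((Commute.refl z).zpow_right a)
  have hwz : Commute w z := by rw [hk]; exact (Commute.refl w).zpow_right k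
  have hφza : (MulAut.conj g) (z ^ a) = z ^ c := by rw [MulAut.conj_apply]; exact h
  have h3 : Commute ((MulAut.conj g) w) (z ^ a) := by
    have h2 := hwza.map (MulAut.conj g).toMonoidHom
    simp only [MulEquiv.coe_toMonoidHom] at h2
    rw [hφza] at h2
    exact (commute_of_commute_zpow hc h2).zpow_right a
  obtain ⟨m, hm⟩ := hall _ h3
  have h5 : Commute ((MulAut.conj g).symm w) (z ^ a) := by
    have h2 := (hwz.zpow_right c).map (MulAut.conj g).symm.toMonoidHom
    simp only [MulEquiv.coe_toMonoidHom] at h2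
    have hφs : (MulAut.conj g).symm (z ^ c) = z ^ a := by
      apply (MulAut.conj g).injective
      rw [MulEquiv.apply_symm_apply, hφza]
    rw [hφs] at h2
    exact h2
  obtain ⟨n, hn⟩ := hall _ h5
  have hw_eq : w = w ^ (m * n) := by
    conv_lhs => rw [← (MulAut.conj g).apply_symm_apply w, hn, map_zpow, hm, ← zpow_mul]
  have hmn : m * n = 1 := by
    have h6 : w ^ (m * n - 1) = 1 := by
      rw [zpow_sub, ← hw_eq, zpow_one]
      group
    have := hwinj _ h6
    omega
  rcases Int.eq_one_or_neg_one_of_mul_eq_one hmn with hm1 | hm1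
  · -- m = 1 : conj g w = w
    have h8 : g * w * g⁻¹ = w := by
      have h9 := hm
      rw [hm1, zpow_one, MulAut.conj_apply] at h9
      exact h9
    have hgw : Commute g w := by
      rw [commute_iff_eq]
      exact mul_inv_eq_iff_eq_mul.mp h8
    rw [hk]
    exact hgw.zpow_right k
  · -- m = -1 : conj g w = w⁻¹
    have hφw : (MulAut.conj g) w = w⁻¹ := by rw [hm, hm1]; exact zpow_neg_one w
    have hsq : (g * g) * w * (g * g)⁻¹ = w := by
      have h9 : (MulAut.conj g) ((MulAut.conj g) w) = w := by
        rw [hφw, _root_.map_inv, hφw, inv_inv]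
      rw [MulAut.conj_apply, MulAut.conj_apply] at h9
      calc (g * g) * w * (g * g)⁻¹ = g * (g * w * g⁻¹) * g⁻¹ := by group
        _ = w := h9
    have hc2 : Commute (g * g) (z ^ a) := by
      have h10 : Commute (g * g) w := by
        rw [commute_iff_eq]
        exact mul_inv_eq_iff_eq_mul.mp hsq
      rw [hk, ← zpow_mul]
      exact h10.zpow_right _
    obtain ⟨r, hr⟩ := hall _ hc2
    have h11 : (MulAut.conj g) (w ^ r) = w ^ (-r) := by
      rw [map_zpow, hφw, inv_zpow, ← zpow_neg]
    have h12 : (MulAut.conj g) (g * g) = g * g := by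
      rw [MulAut.conj_apply]; group
    rw [hr, h11] at h12
    have h13 : w ^ (r + r) = 1 := by
      rw [zpow_add]
      nth_rewrite 1 [← h12]
      rw [← zpow_add]
      simp
    have := hwinj _ h13
    have hr0 : r = 0 := by omega
    rw [hr0, zpow_zero] at hr
    exact absurd hr hg2

private lemma comm_eq_one_iff {G : Type*} [Group G] (u v : G) :
    u⁻¹ * v⁻¹ * u * v = 1 ↔ Commute u v := by
  rw [commute_iff_eq]
  constructor
  · intro h
    have h2 := congrArg (fun t => v * u * t) h
    simpa [mul_assoc] using h2
  · intro h
    have h2 := congrArg (fun t => u⁻¹ * v⁻¹ * t) h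
    simpa [mul_assoc] using h2

end MalcevAux

open MalcevAux in
/-- In a free group `F` whose basis contains two distinct elements `e₁ = of i` and
`e₂ = of j`, a disjunction of two equations is equivalent to the conjunction of four
commutator equations: for all `x, y ∈ F`,
`x = 1 ∨ y = 1` if and only if `[xᵃ, yᵇ] = 1` for all `a ∈ {e₁, e₁⁻¹}` and
`b ∈ {e₂, e₂⁻¹}`, where `xᵃ = a⁻¹xa` and `[u,v] = u⁻¹v⁻¹uv`. -/
theorem malcev_disjunction {β : Type*} (i j : β) (hij : i ≠ j) (x y : FreeGroup β) :
    (x = 1 ∨ y = 1) ↔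
      ∀ a ∈ ({FreeGroup.of i, (FreeGroup.of i)⁻¹} : Set (FreeGroup β)),
        ∀ b ∈ ({FreeGroup.of j, (FreeGroup.of j)⁻¹} : Set (FreeGroup β)),
          (a⁻¹ * x * a)⁻¹ * (b⁻¹ * y * b)⁻¹ * (a⁻¹ * x * a) * (b⁻¹ * y * b) = 1 := by
  constructor
  · rintro (rfl | rfl) a _ b _ <;> group
  · intro h
    by_contra hcon
    push_neg at hcon
    obtain ⟨hx, hy⟩ := hcon
    -- the four commutation facts
    have h11 : Commute ((FreeGroup.of i)⁻¹ * x * FreeGroup.of i)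
        ((FreeGroup.of j)⁻¹ * y * FreeGroup.of j) :=
      (comm_eq_one_iff _ _).1
        (h _ (Set.mem_insert _ _) _ (Set.mem_insert _ _))
    have h12 : Commute ((FreeGroup.of i)⁻¹ * x * FreeGroup.of i)
        (FreeGroup.of j * y * (FreeGroup.of j)⁻¹) := by
      have := (comm_eq_one_iff _ _).1
        (h _ (Set.mem_insert _ _) _ (Set.mem_insert_of_mem _ rfl))
      simpa [inv_inv] using this
    have h21 : Commute (FreeGroup.of i * x * (FreeGroup.of i)⁻¹)
        ((FreeGroup.of j)⁻¹ * y * FreeGroup.of j) := by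
      have := (comm_eq_one_iff _ _).1
        (h _ (Set.mem_insert_of_mem _ rfl) _ (Set.mem_insert _ _))
      simpa [inv_inv] using this
    have h22 : Commute (FreeGroup.of i * x * (FreeGroup.of i)⁻¹)
        (FreeGroup.of j * y * (FreeGroup.of j)⁻¹) := by
      have := (comm_eq_one_iff _ _).1
        (h _ (Set.mem_insert_of_mem _ rfl) _ (Set.mem_insert_of_mem _ rfl))
      simpa [inv_inv] using this
    set u₁ := (FreeGroup.of i)⁻¹ * x * FreeGroup.of i with hu₁def
    set u₂ := FreeGroup.of i * x * (FreeGroup.of i)⁻¹ with hu₂def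
    set v₁ := (FreeGroup.of j)⁻¹ * y * FreeGroup.of j with hv₁def
    set v₂ := FreeGroup.of j * y * (FreeGroup.of j)⁻¹ with hv₂def
    have hu₁ : u₁ ≠ 1 := by
      intro hcon1
      apply hx
      have : x = FreeGroup.of i * u₁ * (FreeGroup.of i)⁻¹ := by rw [hu₁def]; group
      rw [this, hcon1]; group
    have hv₁ : v₁ ≠ 1 := by
      intro hcon1
      apply hy
      have : y = FreeGroup.of j * v₁ * (FreeGroup.of j)⁻¹ := by rw [hv₁def]; group
      rw [this, hcon1]; group
    have hu₂ : u₂ ≠ 1 := by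
      intro hcon1
      apply hx
      have : x = (FreeGroup.of i)⁻¹ * u₂ * FreeGroup.of i := by rw [hu₂def]; group
      rw [this, hcon1]; group
    have hv₂ : v₂ ≠ 1 := by
      intro hcon1
      apply hy
      have : y = (FreeGroup.of j)⁻¹ * v₂ * FreeGroup.of j := by rw [hv₂def]; group
      rw [this, hcon1]; group
    -- transitivity of commutation
    have hu₁u₂ : Commute u₁ u₂ := comm_trans hv₁ h11 h21
    have hv₁v₂ : Commute v₁ v₂ := comm_trans hu₁ h11.symm h12.symm
    -- everything lies in the (cyclic) centralizer of u₁
    obtain ⟨w, hwu₁, hwinj, hall⟩ := centralizer_structure u₁ hu₁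
    obtain ⟨a, hA⟩ := hall u₁ (Commute.refl u₁)
    obtain ⟨c, hC⟩ := hall u₂ hu₁u₂.symm
    obtain ⟨b, hB⟩ := hall v₁ h11.symm
    obtain ⟨d, hD⟩ := hall v₂ h12.symm
    have hw1 : w ≠ 1 := by
      intro hcon1
      apply hu₁
      rw [hA, hcon1, one_zpow]
    -- conjugation relations
    have rel1 : (FreeGroup.of i * FreeGroup.of i) * w ^ a *
        (FreeGroup.of i * FreeGroup.of i)⁻¹ = w ^ c := by
      rw [← hA, ← hC, hu₁def, hu₂def]; group
    have rel2 : (FreeGroup.of j * FreeGroup.of j) * w ^ b *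
        (FreeGroup.of j * FreeGroup.of j)⁻¹ = w ^ d := by
      rw [← hB, ← hD, hv₁def, hv₂def]; group
    have hA1 : w ^ a ≠ 1 := by rw [← hA]; exact hu₁
    have hB1 : w ^ b ≠ 1 := by rw [← hB]; exact hv₁
    -- of i * of i and its square are nontrivial
    have hsq : ∀ t : β, (FreeGroup.of t * FreeGroup.of t : FreeGroup β) ≠ 1 := by
      intro t hcon1
      have h2 := congrArg (FreeGroup.lift (fun _ : β => Multiplicative.ofAdd (1 : ℤ))) hcon1
      simp only [_root_.map_mul, _root_.map_one, FreeGroup.lift_apply_of] at h2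
      have h3 := congrArg Multiplicative.toAdd h2
      simpa using h3
    have hsq2 : ∀ t : β, ((FreeGroup.of t * FreeGroup.of t) *
        (FreeGroup.of t * FreeGroup.of t) : FreeGroup β) ≠ 1 := by
      intro t hcon1
      have h2 := congrArg (FreeGroup.lift (fun _ : β => Multiplicative.ofAdd (1 : ℤ))) hcon1
      simp only [_root_.map_mul, _root_.map_one, FreeGroup.lift_apply_of] at h2
      have h3 := congrArg Multiplicative.toAdd h2
      simpa using h3
    -- the key conjugation lemma
    have hci : Commute (FreeGroup.of i * FreeGroup.of i) w :=
      conj_zpow_commute rel1 hA1 (hsq2 i)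
    have hcj : Commute (FreeGroup.of j * FreeGroup.of j) w :=
      conj_zpow_commute rel2 hB1 (hsq2 j)
    -- hence w commutes with of i and of j
    have hwi : Commute w (FreeGroup.of i) :=
      (comm_trans (hsq i) ((Commute.refl (FreeGroup.of i)).mul_right (Commute.refl _))
        hci.symm).symm
    have hwj : Commute w (FreeGroup.of j) :=
      (comm_trans (hsq j) ((Commute.refl (FreeGroup.of j)).mul_right (Commute.refl _))
        hcj.symm).symm
    obtain ⟨m, hm⟩ := commute_of_imp_zpow i w hwi
    obtain ⟨n, hn⟩ := commute_of_imp_zpow j w hwj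
    have hm0 : m = 0 := zpow_ne_zpow hij (hm.symm.trans hn)
    apply hw1
    rw [hm, hm0, zpow_zero]
end

section
/- Let x, y, z be elements of a free group F with x²y²z² = 1. Then x, y, z pairwise commute. -/
/-- The integer Heisenberg group. -/
@[ext]
structure Heis where
  a : ℤ
  b : ℤ
  c : ℤ

namespace Heis

instance : Mul Heis := ⟨fun p q => ⟨p.a + q.a, p.b + q.b, p.c + q.c + p.a * q.b⟩⟩
instance : One Heis := ⟨⟨0, 0, 0⟩⟩
instance : Inv Heis := ⟨fun p => ⟨-p.a, -p.b, p.a * p.b - p.c⟩⟩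

@[simp] lemma mul_a (p q : Heis) : (p * q).a = p.a + q.a := rfl
@[simp] lemma mul_b (p q : Heis) : (p * q).b = p.b + q.b := rfl
@[simp] lemma mul_c (p q : Heis) : (p * q).c = p.c + q.c + p.a * q.b := rfl
@[simp] lemma one_a : (1 : Heis).a = 0 := rfl
@[simp] lemma one_b : (1 : Heis).b = 0 := rfl
@[simp] lemma one_c : (1 : Heis).c = 0 := rfl
@[simp] lemma inv_a (p : Heis) : p⁻¹.a = -p.a := rfl
@[simp] lemma inv_b (p : Heis) : p⁻¹.b = -p.b := rfl
@[simp] lemma inv_c (p : Heis) : p⁻¹.c = p.a * p.b - p.c := rfl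

instance : Group Heis where
  mul_assoc p q r := by ext <;> simp <;> ring
  one_mul p := by ext <;> simp
  mul_one p := by ext <;> simp
  inv_mul_cancel p := by ext <;> simp

/-- Projection to `ℤ × ℤ`. -/
def proj : Heis →* Multiplicative (ℤ × ℤ) where
  toFun p := Multiplicative.ofAdd (p.a, p.b)
  map_one' := rfl
  map_mul' p q := by simp [← ofAdd_add, Prod.ext_iff]

@[simp] lemma proj_apply (p : Heis) : proj p = Multiplicative.ofAdd (p.a, p.b) := rfl

end Heis

/-- A free group on a subsingleton type is commutative. -/
lemma freeGroup_comm_of_subsingleton {κ : Type*} (hs : ∀ k k' : κ, k = k')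
    (a b : FreeGroup κ) : Commute a b := by
  induction a using FreeGroup.induction_on with
  | C1 => exact Commute.one_left b
  | of k =>
    induction b using FreeGroup.induction_on with
    | C1 => exact Commute.one_right _
    | of k' => rw [hs k k']
    | inv_of k' ih => exact ih.inv_right
    | mul u v ihu ihv => exact ihu.mul_right ihv
  | inv_of k ih => exact ih.inv_left
  | mul u v ihu ihv => exact ihu.mul_left ihv

/-- Lyndon–Schützenberger: if `x² y² z² = 1` in a free group, then `x`, `y`, `z`
pairwise commute. -/
theorem free_group_sq_sq_sq_eq_one_commute {β : Type*} (x y z : FreeGroup β)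
    (h : x ^ 2 * y ^ 2 * z ^ 2 = 1) :
    x * y = y * x ∧ x * z = z * x ∧ y * z = z * y := by
  classical
  set S : Set (FreeGroup β) := {x, y, z} with hS
  set H : Subgroup (FreeGroup β) := Subgroup.closure S with hH
  have hx : x ∈ H := Subgroup.subset_closure (by simp [hS])
  have hy : y ∈ H := Subgroup.subset_closure (by simp [hS])
  have hz : z ∈ H := Subgroup.subset_closure (by simp [hS])
  set x' : H := ⟨x, hx⟩ with hx'
  set y' : H := ⟨y, hy⟩ with hy'
  set z' : H := ⟨z, hz⟩ with hz'
  have hrel : x' ^ 2 * y' ^ 2 * z' ^ 2 = 1 := by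
    apply Subtype.ext
    push_cast
    exact h
  suffices hc : Commute x' y' ∧ Commute x' z' ∧ Commute y' z' by
    refine ⟨?_, ?_, ?_⟩
    · simpa using congrArg Subtype.val hc.1
    · simpa using congrArg Subtype.val hc.2.1
    · simpa using congrArg Subtype.val hc.2.2
  by_cases hsub : ∀ k k' : IsFreeGroup.Generators H, k = k'
  · -- the free group H is cyclic or trivial, hence abelian
    have hcomm : ∀ a b : H, Commute a b := by
      intro a b
      have hco := freeGroup_comm_of_subsingleton hsub
        (IsFreeGroup.toFreeGroup (G := H) a) (IsFreeGroup.toFreeGroup (G := H) b)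
      have := (IsFreeGroup.toFreeGroup (G := H)).injective
      unfold Commute SemiconjBy at hco ⊢
      apply this
      rw [map_mul, map_mul, hco]
    exact ⟨hcomm _ _, hcomm _ _, hcomm _ _⟩
  · exfalso
    push_neg at hsub
    obtain ⟨k₀, k₁, hk01⟩ := hsub
    set g : IsFreeGroup.Generators H → Heis :=
      fun k => if k = k₀ then ⟨1, 0, 0⟩ else ⟨0, 1, 0⟩ with hg
    set φ : H →* Heis := IsFreeGroup.lift g with hφ
    set π : H →* Multiplicative (ℤ × ℤ) := Heis.proj.comp φ with hπ
    have hπ0 : π (IsFreeGroup.of k₀) = Multiplicative.ofAdd (1, 0) := by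
      simp [hπ, hφ, IsFreeGroup.lift_of, hg]
    have hπ1 : π (IsFreeGroup.of k₁) = Multiplicative.ofAdd (0, 1) := by
      simp [hπ, hφ, IsFreeGroup.lift_of, hg, Ne.symm hk01]
    have hπsurj : Function.Surjective π := by
      intro p
      refine ⟨IsFreeGroup.of k₀ ^ (p.toAdd.1) * IsFreeGroup.of k₁ ^ (p.toAdd.2), ?_⟩
      rw [map_mul, map_zpow, map_zpow, hπ0, hπ1]
      apply Multiplicative.toAdd.injective
      simp [Prod.ext_iff]
    -- x', y', z' generate H
    have htop : Subgroup.closure {x', y', z'} = ⊤ := by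
      have h1 := Subgroup.closure_preimage_eq_top S
      have h2 : (Subgroup.closure S).subtype ⁻¹' S = {x', y', z'} := by
        ext ⟨w, hw⟩
        simp [hS, Subtype.ext_iff, hx', hy', hz']
      rw [h2] at h1
      exact h1
    -- coordinates of the images in Heis
    rcases hPx : φ x' with ⟨v₁, v₂, s⟩
    rcases hPy : φ y' with ⟨w₁, w₂, t⟩
    rcases hPz : φ z' with ⟨u₁, u₂, r⟩
    have hπx : π x' = Multiplicative.ofAdd (v₁, v₂) := by rw [hπ]; simp [hPx]
    have hπy : π y' = Multiplicative.ofAdd (w₁, w₂) := by rw [hπ]; simp [hPy]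
    have hπz : π z' = Multiplicative.ofAdd (u₁, u₂) := by rw [hπ]; simp [hPz]
    -- the relation in Heis
    have hrelH : (φ x') ^ 2 * (φ y') ^ 2 * (φ z') ^ 2 = 1 := by
      rw [← map_pow, ← map_pow, ← map_pow, ← map_mul, ← map_mul, hrel, map_one]
    rw [hPx, hPy, hPz] at hrelH
    rw [Heis.ext_iff] at hrelH
    simp only [pow_two, Heis.mul_a, Heis.mul_b, Heis.mul_c, Heis.one_a, Heis.one_b,
      Heis.one_c] at hrelH
    obtain ⟨e1, e2, e3⟩ := hrelH
    have hu1 : u₁ = -v₁ - w₁ := by omega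
    have hu2 : u₂ = -v₂ - w₂ := by omega
    subst hu1 hu2
    -- z is redundant: π z' ∈ closure {π x', π y'}
    have hπztop : Subgroup.closure ({π x', π y'} : Set (Multiplicative (ℤ × ℤ))) = ⊤ := by
      apply le_antisymm le_top
      have himg : Subgroup.closure ({π x', π y', π z'} : Set (Multiplicative (ℤ × ℤ))) = ⊤ := by
        have hmap := MonoidHom.map_closure π ({x', y', z'} : Set H)
        rw [htop] at hmap
        rw [Set.image_insert_eq, Set.image_insert_eq, Set.image_singleton] at hmap
        rw [← hmap]
        rw [← MonoidHom.range_eq_map]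
        exact (MonoidHom.range_eq_top).2 hπsurj
      rw [← himg]
      apply (Subgroup.closure_le _).2
      intro w hw
      rcases hw with hw | hw | hw
      · rw [hw]; exact Subgroup.subset_closure (by simp)
      · rw [hw]; exact Subgroup.subset_closure (by simp)
      · rw [Set.mem_singleton_iff] at hw
        rw [hw]
        have : π z' = (π x' * π y')⁻¹ := by
          rw [hπx, hπy, hπz]
          apply Multiplicative.toAdd.injective
          simp [Prod.ext_iff]
          omega
        rw [this]
        exact inv_mem (mul_mem (Subgroup.subset_closure (by simp))
          (Subgroup.subset_closure (by simp)))
    -- extract integer combinations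
    have h10 : Multiplicative.ofAdd ((1 : ℤ), (0 : ℤ)) ∈
        Subgroup.closure ({π x', π y'} : Set (Multiplicative (ℤ × ℤ))) := by
      rw [hπztop]; trivial
    have h01 : Multiplicative.ofAdd ((0 : ℤ), (1 : ℤ)) ∈
        Subgroup.closure ({π x', π y'} : Set (Multiplicative (ℤ × ℤ))) := by
      rw [hπztop]; trivial
    rw [Subgroup.mem_closure_pair] at h10 h01
    obtain ⟨m, n, hmn⟩ := h10
    obtain ⟨m', n', hmn'⟩ := h01
    rw [hπx, hπy] at hmn hmn'
    have hmn2 := congrArg Multiplicative.toAdd hmn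
    have hmn2' := congrArg Multiplicative.toAdd hmn'
    simp [Prod.ext_iff] at hmn2 hmn2'
    obtain ⟨f1, f2⟩ := hmn2
    obtain ⟨f3, f4⟩ := hmn2'
    -- determinant is a unit
    have hdet : (v₁ * w₂ - v₂ * w₁) * (m * n' - m' * n) = 1 := by
      linear_combination (m' * v₂ + n' * w₂) * f1 - (m * v₂ + n * w₂) * f3 + f4
    -- determinant is even
    have heven : v₁ * w₂ - v₂ * w₁ =
        2 * (-(s + t + r) - v₁ * v₂ - w₁ * w₂ - 2 * v₁ * w₂
          + 2 * (v₁ + w₁) * (v₂ + w₂) - v₂ * w₁) := by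
      linear_combination e3
    rcases Int.isUnit_iff.1 (IsUnit.of_mul_eq_one _ hdet) with h' | h' <;> omega
end

section
/- Let F be a free group of rank at least 2 with basis ā, and let X be a finite set of variables. For any finite family of finite sets of equations Σ_{ij}(x̄,ā) = 1 (i ≤ m, j ≤ m_i), where each Σ_{ij} is a word in the variables X and in the basis elements ā, there exists a single word σ(x̄,ā) in the variables X and the basis elements ā such that for every assignment x̄ ↦ F: the disjunction over i of the conjunctions over j of the equations Σ_{ij}(x̄,ā) = 1 holds in F if and only if σ(x̄,ā) = 1 holds in F. -/
namespace FGMal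
open FreeGroup List
open scoped commutatorElement

variable {α : Type*}

section Words
variable [DecidableEq α]

/-- Non-cancelling adjacent pair (matching `FreeGroup.reduce`'s cancellation test). -/
def NC (x y : α × Bool) : Prop := ¬(x.1 = y.1 ∧ x.2 = !y.2)

theorem reduce_eq_self_of_chain : ∀ {L : List (α × Bool)}, List.Chain' NC L → reduce L = L := by
  intro L
  induction L with
  | nil => intro _; rfl
  | cons x L ih =>
    intro h
    rw [reduce.cons, ih h.tail]
    cases L with
    | nil => rfl
    | cons y t =>
      have hxy : NC x y := (List.isChain_cons_cons.1 h).1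
      simp only [NC] at hxy
      simp [hxy]

theorem chain'_reduce (L : List (α × Bool)) : List.Chain' NC (reduce L) := by
  induction L with
  | nil => simp [List.Chain']
  | cons x L ih =>
    rw [reduce.cons]
    rcases h : reduce L with _ | ⟨y, t⟩
    · simp [List.Chain']
    · rw [h] at ih
      by_cases hc : x.1 = y.1 ∧ x.2 = !y.2
      · simp only [if_pos hc]
        exact ih.tail
      · simp only [if_neg hc]
        exact List.isChain_cons_cons.2 ⟨hc, ih⟩

theorem chain'_toWord (x : FreeGroup α) : List.Chain' NC x.toWord := by
  rw [← reduce_toWord]; exact chain'_reduce _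

theorem toWord_eq_of_chain {L : List (α × Bool)} (h : List.Chain' NC L) :
    (mk L).toWord = L := by rw [toWord_mk, reduce_eq_self_of_chain h]

theorem invRev_append' (L₁ L₂ : List (α × Bool)) :
    invRev (L₁ ++ L₂) = invRev L₂ ++ invRev L₁ := by
  simp [invRev]

theorem invRev_singleton (x : α × Bool) : invRev [x] = [(x.1, !x.2)] := by
  simp [invRev]

theorem chain'_invRev {L : List (α × Bool)} (h : List.Chain' NC L) :
    List.Chain' NC (invRev L) := by
  have : reduce (invRev L) = invRev L := by
    rw [reduce_invRev, reduce_eq_self_of_chain h]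
  rw [← this]; exact chain'_reduce _

/-- Cancellation structure of a product of two reduced words. -/
theorem conc_aux : ∀ (n : ℕ) (L₁ L₂ : List (α × Bool)), L₁.length ≤ n →
    List.Chain' NC L₁ → List.Chain' NC L₂ →
    ∃ K₁ M K₂, L₁ = K₁ ++ M ∧ L₂ = invRev M ++ K₂ ∧ reduce (L₁ ++ L₂) = K₁ ++ K₂ := by
  intro n
  induction n with
  | zero =>
    intro L₁ L₂ hlen h₁ h₂
    have : L₁ = [] := List.eq_nil_of_length_eq_zero (Nat.le_zero.1 hlen)
    subst this
    exact ⟨[], [], L₂, by simp [invRev], by simp [invRev], by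
      simpa using reduce_eq_self_of_chain h₂⟩
  | succ n ih =>
    intro L₁ L₂ hlen h₁ h₂
    rcases List.eq_nil_or_concat L₁ with rfl | ⟨K, x, hKx⟩
    · exact ⟨[], [], L₂, by simp [invRev], by simp [invRev], by
        simpa using reduce_eq_self_of_chain h₂⟩
    rw [List.concat_eq_append] at hKx
    subst hKx
    cases L₂ with
    | nil =>
      exact ⟨K ++ [x], [], [], by simp [invRev], by simp [invRev], by
        simpa using reduce_eq_self_of_chain h₁⟩
    | cons y T =>
      by_cases hc : x.1 = y.1 ∧ x.2 = !y.2
      · -- cancellation at the junction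
        have hy : y = (x.1, !x.2) := by
          obtain ⟨h1, h2⟩ := hc
          cases y with
          | mk y1 y2 =>
            simp only at h1 h2
            subst h1
            cases y2 <;> simp_all
        have hstep : Red.Step ((K ++ [x]) ++ y :: T) (K ++ T) := by
          have : (K ++ [x]) ++ y :: T = K ++ (x.1, x.2) :: (x.1, !x.2) :: T := by
            rw [hy]; simp
          rw [this]
          exact Red.Step.not
        have hred : reduce ((K ++ [x]) ++ y :: T) = reduce (K ++ T) := reduce.Step.eq hstep
        have hKlen : K.length ≤ n := by
          simp only [List.length_append, List.length_singleton] at hlen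
          omega
        have hKchain : List.Chain' NC K := h₁.prefix ⟨[x], rfl⟩
        obtain ⟨K₁, M, K₂, e1, e2, e3⟩ := ih K T hKlen hKchain h₂.tail
        refine ⟨K₁, M ++ [x], K₂, ?_, ?_, ?_⟩
        · rw [e1]; simp
        · rw [invRev_append', invRev_singleton, e2, hy]
          simp
        · rw [hred, e3]
      · -- no cancellation: the concatenation is already reduced
        refine ⟨K ++ [x], [], y :: T, by simp [invRev], by simp [invRev], ?_⟩
        apply reduce_eq_self_of_chain
        unfold List.Chain'
        rw [List.isChain_append]
        refine ⟨h₁, h₂, ?_⟩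
        intro p hp q hq
        rw [List.getLast?_concat] at hp
        simp only [Option.mem_def, Option.some.injEq] at hp
        simp only [List.head?_cons, Option.mem_def, Option.some.injEq] at hq
        subst hp; subst hq
        exact hc

theorem conc {L₁ L₂ : List (α × Bool)} (h₁ : List.Chain' NC L₁) (h₂ : List.Chain' NC L₂) :
    ∃ K₁ M K₂, L₁ = K₁ ++ M ∧ L₂ = invRev M ++ K₂ ∧ reduce (L₁ ++ L₂) = K₁ ++ K₂ :=
  conc_aux L₁.length L₁ L₂ le_rfl h₁ h₂

end Words

section Key
variable [DecidableEq α]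

theorem head?_invRev (L : List (α × Bool)) :
    (invRev L).head? = L.getLast?.map (fun z => (z.1, !z.2)) := by
  simp [invRev]

theorem toWord_mul' (x y : FreeGroup α) :
    (x * y).toWord = reduce (x.toWord ++ y.toWord) := by
  conv_lhs => rw [← mk_toWord (x := x), ← mk_toWord (x := y)]
  rw [mul_mk, toWord_mk]

theorem of_toWord (c : α) : (of c : FreeGroup α).toWord = [(c, true)] := by
  simp [toWord_of]

theorem mk_single_false (c : α) : (mk [(c, false)] : FreeGroup α) = (of c)⁻¹ := by
  rw [of, inv_mk]
  simp [invRev]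

theorem conj_word_chain {c : α} {P : List (α × Bool)} (hP : List.Chain' NC P)
    (hp : ∀ z ∈ P.getLast?, z.1 ≠ c) :
    List.Chain' NC (P ++ (c, true) :: invRev P) := by
  unfold List.Chain'
  rw [List.isChain_append]
  refine ⟨hP, ?_, ?_⟩
  · rw [List.isChain_cons]
    refine ⟨?_, chain'_invRev hP⟩
    intro y hy
    rw [head?_invRev] at hy
    simp only [Option.mem_def, Option.map_eq_some_iff] at hy
    obtain ⟨z, hz, rfl⟩ := hy
    have := hp z hz
    intro hcon
    exact this hcon.1.symm
  · intro x hx y hy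
    simp only [List.head?_cons, Option.mem_def, Option.some.injEq] at hy
    subst hy
    intro hcon
    exact hp x hx hcon.1

theorem conj_toWord {c : α} {p : FreeGroup α}
    (hp : ∀ z ∈ p.toWord.getLast?, z.1 ≠ c) :
    (p * of c * p⁻¹).toWord = p.toWord ++ (c, true) :: invRev p.toWord := by
  have h1 : p * of c * p⁻¹ = mk (p.toWord ++ (c, true) :: invRev p.toWord) := by
    conv_lhs => rw [← mk_toWord (x := p)]
    rw [inv_mk, of, mul_mk, mul_mk]
    simp
  rw [h1]
  exact toWord_eq_of_chain (conj_word_chain (chain'_toWord p) hp)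

theorem invRev_conjWord (P : List (α × Bool)) (c : α) :
    invRev (P ++ (c, true) :: invRev P) = P ++ (c, false) :: invRev P := by
  rw [show (c, true) :: invRev P = [(c, true)] ++ invRev P from rfl,
    invRev_append', invRev_append', invRev_invRev, invRev_singleton]
  simp

theorem last_not_c {c : α} {L : List (α × Bool)}
    (h : ¬∃ K e, L = K ++ [(c, e)]) : ∀ z ∈ L.getLast?, z.1 ≠ c := by
  rcases List.eq_nil_or_concat L with rfl | ⟨K, x, hK⟩
  · simp
  · rw [List.concat_eq_append] at hK
    subst hK
    intro z hz
    rw [List.getLast?_concat] at hz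
    simp only [Option.mem_def, Option.some.injEq] at hz
    subst hz
    intro hc
    exact h ⟨K, x.2, by rw [← hc]⟩

/-- The combinatorial core (Malcev-type rigidity):
if `p a p⁻¹ · q a q⁻¹ = a²` in a free group then `p a p⁻¹ = a`. -/
theorem key_aux (c : α) : ∀ (N : ℕ) (p q : FreeGroup α),
    p.toWord.length + q.toWord.length ≤ N →
    p * of c * p⁻¹ * (q * of c * q⁻¹) = of c * of c →
    p * of c * p⁻¹ = of c := by
  intro N
  induction N with
  | zero =>
    intro p q hlen heq
    have hp : p = 1 := toWord_eq_nil_iff.1 (List.eq_nil_of_length_eq_zero (by omega))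
    subst hp; simp
  | succ N ih =>
    intro p q hlen heq
    by_cases hpc : ∃ K e, p.toWord = K ++ [(c, e)]
    · -- strip a trailing c-letter from p
      obtain ⟨K, e, hK⟩ := hpc
      have hKchain : List.Chain' NC K := (chain'_toWord p).prefix ⟨[(c, e)], hK.symm⟩
      have hp'word : (mk K : FreeGroup α).toWord = K := toWord_eq_of_chain hKchain
      have hpp : p = mk K * mk [(c, e)] := by
        rw [mul_mk, ← hK, mk_toWord]
      have hu : mk [(c, e)] * of c * (mk [(c, e)] : FreeGroup α)⁻¹ = of c := by
        cases e
        · rw [mk_single_false]; group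
        · rw [show (mk [(c, true)] : FreeGroup α) = of c from rfl]; group
      have hconj : p * of c * p⁻¹ = mk K * of c * (mk K)⁻¹ := by
        rw [hpp, mul_inv_rev]
        calc mk K * mk [(c, e)] * of c * ((mk [(c, e)])⁻¹ * (mk K)⁻¹)
            = mk K * (mk [(c, e)] * of c * (mk [(c, e)])⁻¹) * (mk K)⁻¹ := by group
          _ = mk K * of c * (mk K)⁻¹ := by rw [hu]
      rw [hconj] at heq ⊢
      refine ih (mk K) q ?_ heq
      have : p.toWord.length = K.length + 1 := by rw [hK]; simp
      rw [hp'word]; omega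
    by_cases hqc : ∃ K e, q.toWord = K ++ [(c, e)]
    · -- strip a trailing c-letter from q
      obtain ⟨K, e, hK⟩ := hqc
      have hKchain : List.Chain' NC K := (chain'_toWord q).prefix ⟨[(c, e)], hK.symm⟩
      have hq'word : (mk K : FreeGroup α).toWord = K := toWord_eq_of_chain hKchain
      have hqq : q = mk K * mk [(c, e)] := by
        rw [mul_mk, ← hK, mk_toWord]
      have hu : mk [(c, e)] * of c * (mk [(c, e)] : FreeGroup α)⁻¹ = of c := by
        cases e
        · rw [mk_single_false]; group
        · rw [show (mk [(c, true)] : FreeGroup α) = of c from rfl]; group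
      have hconj : q * of c * q⁻¹ = mk K * of c * (mk K)⁻¹ := by
        rw [hqq, mul_inv_rev]
        calc mk K * mk [(c, e)] * of c * ((mk [(c, e)])⁻¹ * (mk K)⁻¹)
            = mk K * (mk [(c, e)] * of c * (mk [(c, e)])⁻¹) * (mk K)⁻¹ := by group
          _ = mk K * of c * (mk K)⁻¹ := by rw [hu]
      rw [hconj] at heq
      refine ih p (mk K) ?_ heq
      have : q.toWord.length = K.length + 1 := by rw [hK]; simp
      rw [hq'word]; omega
    -- now neither p nor q ends with a c-letter
    have hp : ∀ z ∈ p.toWord.getLast?, z.1 ≠ c := last_not_c hpc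
    have hq : ∀ z ∈ q.toWord.getLast?, z.1 ≠ c := last_not_c hqc
    by_cases hP0 : p.toWord = []
    · have : p = 1 := toWord_eq_nil_iff.1 hP0
      subst this; simp
    by_cases hQ0 : q.toWord = []
    · have : q = 1 := toWord_eq_nil_iff.1 hQ0
      subst this
      simp only [one_mul, inv_one, mul_one] at heq
      exact mul_right_cancel heq
    exfalso
    set P := p.toWord with hPdef
    set Q := q.toWord with hQdef
    have hW1 : (p * of c * p⁻¹).toWord = P ++ (c, true) :: invRev P := conj_toWord hp
    have hW2 : (q * of c * q⁻¹).toWord = Q ++ (c, true) :: invRev Q := conj_toWord hq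
    have hcc : (of c * of c : FreeGroup α).toWord = [(c, true), (c, true)] := by
      rw [of, mul_mk, toWord_mk]
      apply reduce_eq_self_of_chain
      simp [NC, List.Chain', List.isChain_cons_cons]
    have hprod : reduce ((P ++ (c, true) :: invRev P) ++ (Q ++ (c, true) :: invRev Q))
        = [(c, true), (c, true)] := by
      rw [← hW1, ← hW2, ← toWord_mul', heq, hcc]
    have hchain1 : List.Chain' NC (P ++ (c, true) :: invRev P) :=
      hW1 ▸ chain'_toWord _
    have hchain2 : List.Chain' NC (Q ++ (c, true) :: invRev Q) :=
      hW2 ▸ chain'_toWord _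
    obtain ⟨K₁, M, K₂, e1, e2, e3⟩ := conc hchain1 hchain2
    rw [hprod] at e3
    -- e3 : [(c,true),(c,true)] = K₁ ++ K₂
    rcases K₁ with _ | ⟨u, _ | ⟨v, _ | ⟨w, K₁'⟩⟩⟩
    · -- Case A : K₁ = []
      have hK₂ : K₂ = [(c, true), (c, true)] := by simpa using e3.symm
      simp only [List.nil_append] at e1
      rw [← e1, invRev_conjWord, hK₂] at e2
      -- e2 : Q ++ (c,true) :: invRev Q = (P ++ (c,false) :: invRev P) ++ [(c,true),(c,true)]
      have hQlen : Q.length = P.length + 1 := by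
        have := congrArg List.length e2
        simp [invRev_length] at this
        omega
      have e2' : Q ++ ((c, true) :: invRev Q) =
          (P ++ [(c, false)]) ++ (invRev P ++ [(c, true), (c, true)]) := by
        rw [e2]; simp
      have hQval := (List.append_inj e2' (by simp [hQlen])).1
      have hlast : Q.getLast? = some (c, false) := by rw [hQval, List.getLast?_concat]
      exact hq _ (by rw [hlast]; rfl) rfl
    · -- Case B : K₁ = [u]
      simp only [List.cons_append, List.nil_append] at e3 e1
      injection e3 with h1 h2
      subst h1
      have hK₂ : K₂ = [(c, true)] := h2.symm
      have hi1 : invRev M ++ [(c, false)] = P ++ (c, false) :: invRev P := by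
        have h4 := congrArg invRev e1
        rw [invRev_conjWord, show (c, true) :: M = [(c, true)] ++ M from rfl,
          invRev_append', invRev_singleton] at h4
        simpa using h4.symm
      obtain ⟨z, P', hPcase⟩ := List.exists_cons_of_ne_nil hP0
      have hiP : invRev P = invRev P' ++ [(z.1, !z.2)] := by
        rw [hPcase, show z :: P' = [z] ++ P' from rfl, invRev_append', invRev_singleton]
      have hlenP' : P'.length + 1 = P.length := by rw [hPcase]; simp
      have hi2 : invRev M ++ [(c, false)] = (P ++ (c, false) :: invRev P') ++ [(z.1, !z.2)] := by
        rw [hi1, hiP]; simp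
      have hsplit := List.append_inj' hi2 (by simp)
      rw [hsplit.1, hK₂] at e2
      have hQP : Q.length = P.length := by
        have := congrArg List.length e2
        simp [invRev_length] at this
        omega
      have e2' : Q ++ ((c, true) :: invRev Q) =
          P ++ ((c, false) :: (invRev P' ++ [(c, true)])) := by
        rw [e2]; simp
      have := (List.append_inj e2' (by simp [hQP])).2
      simp at this
    · -- Case C : K₁ = [u, v]
      simp only [List.cons_append, List.nil_append] at e3 e1
      injection e3 with h1 h2
      injection h2 with h2 h3
      subst h1; subst h2
      have hK₂ : K₂ = [] := h3.symm
      rw [hK₂, List.append_nil] at e2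
      -- e2 : Q ++ (c,true) :: invRev Q = invRev M
      have hM : M = Q ++ (c, false) :: invRev Q := by
        have h4 := congrArg invRev e2
        rw [invRev_invRev, invRev_conjWord] at h4
        exact h4.symm
      rw [hM] at e1
      have hPQ : P.length = Q.length + 1 := by
        have := congrArg List.length e1
        simp [invRev_length] at this
        omega
      have e1' : (P ++ [(c, true)]) ++ invRev P =
          ((c, true) :: (c, true) :: Q) ++ ((c, false) :: invRev Q) := by
        simpa using e1
      have h5 := (List.append_inj e1' (by simp [hPQ])).2
      -- h5 : invRev P = (c,false) :: invRev Q
      have hPval : P = Q ++ [(c, true)] := by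
        have h6 := congrArg invRev h5
        rw [invRev_invRev, show (c, false) :: invRev Q = [(c, false)] ++ invRev Q from rfl,
          invRev_append', invRev_invRev, invRev_singleton] at h6
        simpa using h6
      have hlast : P.getLast? = some (c, true) := by rw [hPval, List.getLast?_concat]
      exact hp _ (by rw [hlast]; rfl) rfl
    · -- K₁ too long
      have := congrArg List.length e3
      simp at this

theorem key {c : α} {p q : FreeGroup α}
    (heq : p * of c * p⁻¹ * (q * of c * q⁻¹) = of c * of c) :
    p * of c * p⁻¹ = of c :=
  key_aux c _ p q le_rfl heq

end Key

section Alg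
variable [DecidableEq α]

/-- Exponent-sum homomorphism at the letter `s`. -/
def expSum (s : α) : FreeGroup α →* Multiplicative ℤ :=
  FreeGroup.lift fun t => Multiplicative.ofAdd (if t = s then (1 : ℤ) else 0)

@[simp] theorem expSum_of_self (s : α) :
    expSum s (of s) = Multiplicative.ofAdd (1 : ℤ) := by
  simp [expSum]

theorem expSum_of_ne {s t : α} (h : t ≠ s) : expSum s (of t) = 1 := by
  simp [expSum, h]

theorem expSum_zpow_self (s : α) (k : ℤ) :
    expSum s (of s ^ k) = Multiplicative.ofAdd k := by
  rw [_root_.map_zpow, expSum_of_self, ← ofAdd_zsmul]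
  simp

theorem of_mul_of_ne {s t : α} (h : s ≠ t) :
    (of s * of t : FreeGroup α) ≠ of t * of s := by
  intro hsame
  have c1 : List.Chain' NC [(s, true), (t, true)] := by
    simp [NC, List.Chain', List.isChain_cons_cons, h]
  have c2 : List.Chain' NC [(t, true), (s, true)] := by
    simp [NC, List.Chain', List.isChain_cons_cons, Ne.symm h]
  have h1 : (of s * of t : FreeGroup α).toWord = [(s, true), (t, true)] := by
    rw [of, of, mul_mk]; exact toWord_eq_of_chain c1
  have h2 : (of t * of s : FreeGroup α).toWord = [(t, true), (s, true)] := by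
    rw [of, of, mul_mk]; exact toWord_eq_of_chain c2
  rw [hsame, h2] at h1
  injection h1 with h3 _
  exact h (congrArg Prod.fst h3).symm

theorem chain_replicate [Subsingleton α] (s₀ : α) :
    ∀ L : List (α × Bool), List.Chain' NC L →
      ∃ (n : ℕ) (e : Bool), L = List.replicate n (s₀, e) := by
  intro L
  induction L with
  | nil => exact fun _ => ⟨0, true, rfl⟩
  | cons x L ih =>
    intro h
    obtain ⟨n, e, rfl⟩ := ih h.tail
    have hx1 : x.1 = s₀ := Subsingleton.elim _ _
    cases n with
    | zero =>
      refine ⟨1, x.2, ?_⟩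
      simp only [List.replicate]
      congr 1
      exact Prod.ext hx1 rfl
    | succ n =>
      have hhd : NC x (s₀, e) := by
        simp only [List.replicate_succ, List.Chain', List.isChain_cons_cons] at h
        exact h.1
      have hx2 : x.2 = e := by
        by_contra hne
        exact hhd ⟨hx1, by cases hx2 : x.2 <;> cases e <;> simp_all⟩
      refine ⟨n + 2, e, ?_⟩
      rw [show n + 2 = (n+1) + 1 from rfl, List.replicate_succ]
      congr 1
      exact Prod.ext hx1 hx2

theorem mk_replicate (s₀ : α) (e : Bool) (n : ℕ) :
    (mk (List.replicate n (s₀, e)) : FreeGroup α) =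
      (if e then of s₀ else (of s₀)⁻¹) ^ n := by
  induction n with
  | zero => rw [List.replicate_zero, pow_zero, one_eq_mk]
  | succ n ih =>
    rw [List.replicate_succ, show ((s₀, e) :: List.replicate n (s₀, e)) =
      [(s₀, e)] ++ List.replicate n (s₀, e) from rfl, ← mul_mk, ih, pow_succ']
    congr 1
    cases e
    · exact mk_single_false s₀
    · rfl

theorem exists_zpow_of_subsingleton [Subsingleton α] (s₀ : α) (x : FreeGroup α) :
    ∃ k : ℤ, x = of s₀ ^ k := by
  obtain ⟨n, e, hL⟩ := chain_replicate s₀ x.toWord (chain'_toWord x)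
  have hx : x = mk (List.replicate n (s₀, e)) := by rw [← hL, mk_toWord]
  rw [hx, mk_replicate]
  cases e
  · exact ⟨-(n : ℤ), by simp [zpow_neg, ← zpow_natCast]⟩
  · exact ⟨(n : ℤ), by simp [← zpow_natCast]⟩

theorem eq_one_of_isEmpty [IsEmpty α] (x : FreeGroup α) : x = 1 := by
  rcases hL : x.toWord with _ | ⟨z, L⟩
  · exact toWord_eq_nil_iff.1 hL
  · exact (IsEmpty.false z.1).elim

theorem subsingleton_free_comm [Subsingleton α] (x y : FreeGroup α) : x * y = y * x := by
  rcases isEmpty_or_nonempty α with hS | ⟨⟨s₀⟩⟩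
  · rw [eq_one_of_isEmpty x, eq_one_of_isEmpty y]
  · obtain ⟨k, rfl⟩ := exists_zpow_of_subsingleton s₀ x
    obtain ⟨l, rfl⟩ := exists_zpow_of_subsingleton s₀ y
    exact (Commute.zpow_zpow (Commute.refl _) k l)

end Alg

section AlgG

/-- An abelian free group is generated by one element. -/
theorem abelian_free_cyclic (G : Type*) [Group G] [IsFreeGroup G]
    (hcomm : ∀ x y : G, x * y = y * x) :
    ∃ w : G, ∀ g : G, ∃ k : ℤ, g = w ^ k := by
  classical
  set e := IsFreeGroup.toFreeGroup G with he
  have hsub : Subsingleton (IsFreeGroup.Generators G) := by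
    by_contra hns
    rw [not_subsingleton_iff_nontrivial] at hns
    obtain ⟨s, t, hst⟩ := hns.exists_pair_ne
    refine of_mul_of_ne hst ?_
    have h2 := hcomm (e.symm (FreeGroup.of s)) (e.symm (FreeGroup.of t))
    have h3 := congrArg e h2
    simpa [_root_.map_mul] using h3
  rcases isEmpty_or_nonempty (IsFreeGroup.Generators G) with hS | ⟨⟨s₀⟩⟩
  · refine ⟨1, fun g => ⟨0, ?_⟩⟩
    have : e g = 1 := eq_one_of_isEmpty _
    have := congrArg e.symm this
    simpa using this
  · refine ⟨e.symm (FreeGroup.of s₀), fun g => ?_⟩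
    obtain ⟨k, hk⟩ := exists_zpow_of_subsingleton s₀ (e g)
    refine ⟨k, ?_⟩
    have := congrArg e.symm hk
    simpa [_root_.map_zpow] using this

/-- An abelian free group embeds into `ℤ`. -/
theorem abelian_free_embeds (G : Type*) [Group G] [IsFreeGroup G]
    (hcomm : ∀ x y : G, x * y = y * x) :
    ∃ φ : G →* Multiplicative ℤ, Function.Injective φ := by
  classical
  set e := IsFreeGroup.toFreeGroup G with he
  have hsub : Subsingleton (IsFreeGroup.Generators G) := by
    by_contra hns
    rw [not_subsingleton_iff_nontrivial] at hns
    obtain ⟨s, t, hst⟩ := hns.exists_pair_ne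
    refine of_mul_of_ne hst ?_
    have h2 := hcomm (e.symm (FreeGroup.of s)) (e.symm (FreeGroup.of t))
    have h3 := congrArg e h2
    simpa [_root_.map_mul] using h3
  rcases isEmpty_or_nonempty (IsFreeGroup.Generators G) with hS | ⟨⟨s₀⟩⟩
  · refine ⟨1, fun x y _ => ?_⟩
    have hx : e x = 1 := eq_one_of_isEmpty _
    have hy : e y = 1 := eq_one_of_isEmpty _
    exact e.injective (hx.trans hy.symm)
  · refine ⟨(expSum s₀).comp e.toMonoidHom, fun x y hxy => ?_⟩
    obtain ⟨k, hk⟩ := exists_zpow_of_subsingleton s₀ (e x)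
    obtain ⟨l, hl⟩ := exists_zpow_of_subsingleton s₀ (e y)
    simp only [MonoidHom.comp_apply, MulEquiv.coe_toMonoidHom] at hxy
    rw [hk, hl, expSum_zpow_self, expSum_zpow_self] at hxy
    have hkl : k = l := by
      have := congrArg Multiplicative.toAdd hxy
      simpa using this
    apply e.injective
    rw [hk, hl, hkl]

end AlgG

section Alg2
variable [DecidableEq α]

/-- Free groups are torsion-free. -/
theorem tf {x : FreeGroup α} (hx : x ≠ 1) {n : ℤ} (hn : n ≠ 0) : x ^ n ≠ 1 := by
  set H := Subgroup.zpowers x with hH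
  have hxH : x ∈ H := Subgroup.mem_zpowers x
  have hcomm : ∀ a b : H, a * b = b * a := by
    rintro ⟨a, ha⟩ ⟨b, hb⟩
    obtain ⟨i, rfl⟩ := Subgroup.mem_zpowers_iff.mp ha
    obtain ⟨j, rfl⟩ := Subgroup.mem_zpowers_iff.mp hb
    exact Subtype.ext (((Commute.refl x).zpow_zpow i j).eq)
  obtain ⟨φ, hφ⟩ := abelian_free_embeds H hcomm
  intro hcon
  have h1 : (⟨x, hxH⟩ : H) ^ n = 1 := by
    apply Subtype.ext
    push_cast
    simpa using hcon
  have h2 : φ ⟨x, hxH⟩ ≠ 1 := by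
    intro h3
    have h4 := hφ (h3.trans (_root_.map_one φ).symm)
    exact hx (by simpa using congrArg Subtype.val h4)
  have h4 : (φ ⟨x, hxH⟩) ^ n = 1 := by rw [← _root_.map_zpow, h1]; exact _root_.map_one φ
  apply h2
  have h5 := congrArg Multiplicative.toAdd h4
  rw [toAdd_zpow] at h5
  rcases (by simpa [zsmul_eq_mul, mul_eq_zero] using h5 : n = 0 ∨ φ ⟨x, hxH⟩ = 1) with h | h
  · exact absurd h hn
  · exact h

/-- Commuting elements of a free group are powers of a common element. -/
theorem commute_exists_root {x y : FreeGroup α} (h : Commute x y) :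
    ∃ (z : FreeGroup α) (i j : ℤ), x = z ^ i ∧ y = z ^ j := by
  set H := Subgroup.closure ({x, y} : Set (FreeGroup α)) with hH
  have hxH : x ∈ H := Subgroup.subset_closure (by simp)
  have hyH : y ∈ H := Subgroup.subset_closure (by simp)
  have hpair : ∀ a ∈ ({x, y} : Set (FreeGroup α)), ∀ b ∈ ({x, y} : Set (FreeGroup α)),
      a * b = b * a := by
    intro a ha b hb
    rcases ha with rfl | ha <;> rcases hb with rfl | hb
    · rfl
    · rcases hb with rfl; exact h
    · rcases ha with rfl; exact h.symm
    · rcases ha with rfl; rcases hb with rfl; rfl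
  have step1 : Subgroup.closure ({x, y} : Set (FreeGroup α)) ≤
      Subgroup.centralizer {x, y} :=
    (Subgroup.closure_le _).mpr fun a ha =>
      Subgroup.mem_centralizer_iff.mpr fun b hb => hpair b hb a ha
  have step2 : Subgroup.closure ({x, y} : Set (FreeGroup α)) ≤
      Subgroup.centralizer (Subgroup.closure ({x, y} : Set (FreeGroup α)) : Set (FreeGroup α)) :=
    (Subgroup.closure_le _).mpr fun a ha =>
      Subgroup.mem_centralizer_iff.mpr fun b hb =>
        (Subgroup.mem_centralizer_iff.mp (step1 hb) a ha).symm
  have hcomm : ∀ a b : H, a * b = b * a := by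
    rintro ⟨a, ha⟩ ⟨b, hb⟩
    exact Subtype.ext (Subgroup.mem_centralizer_iff.mp (step2 hb) a ha)
  obtain ⟨w, hw⟩ := abelian_free_cyclic H hcomm
  obtain ⟨i, hi⟩ := hw ⟨x, hxH⟩
  obtain ⟨j, hj⟩ := hw ⟨y, hyH⟩
  refine ⟨(w : FreeGroup α), i, j, ?_, ?_⟩
  · have := congrArg Subtype.val hi
    push_cast at this
    simpa using this
  · have := congrArg Subtype.val hj
    push_cast at this
    simpa using this

end Alg2

section Alg3
variable [DecidableEq α]

/-- The centralizer of a basis element is its cyclic span. -/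
theorem commute_with_of {s : α} {z : FreeGroup α} (h : Commute z (of s)) :
    ∃ k : ℤ, z = of s ^ k := by
  obtain ⟨w, i, j, hz, hs⟩ := commute_exists_root h
  have hj := congrArg (expSum s) hs
  rw [expSum_of_self, _root_.map_zpow] at hj
  have hj' := congrArg Multiplicative.toAdd hj
  rw [toAdd_zpow] at hj'
  simp only [toAdd_ofAdd, zsmul_eq_mul] at hj'
  rcases Int.eq_one_or_neg_one_of_mul_eq_one hj'.symm with h1 | h1
  · subst h1
    rw [zpow_one] at hs
    exact ⟨i, by rw [hz, ← hs]⟩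
  · subst h1
    rw [zpow_neg_one] at hs
    refine ⟨-i, ?_⟩
    rw [hz, show w = (of s)⁻¹ from by rw [hs, inv_inv]]
    rw [inv_zpow, ← zpow_neg]

theorem eq_one_of_two_commute {s t : α} (hst : s ≠ t) {z : FreeGroup α}
    (hs : Commute z (of s)) (ht : Commute z (of t)) : z = 1 := by
  obtain ⟨k, rfl⟩ := commute_with_of hs
  obtain ⟨l, hl⟩ := commute_with_of ht
  have h1 := congrArg (expSum t) hl
  rw [expSum_zpow_self, _root_.map_zpow, expSum_of_ne hst, one_zpow] at h1
  have h2 : l = 0 := by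
    have := congrArg Multiplicative.toAdd h1
    simpa using this.symm
  rw [hl, h2, zpow_zero]

/-- Commutative transitivity: the centralizer of a nontrivial element is abelian. -/
theorem centralizer_comm {g : FreeGroup α} (hg : g ≠ 1) {u v : FreeGroup α}
    (hu : Commute u g) (hv : Commute v g) : Commute u v := by
  classical
  set H := Subgroup.centralizer ({g} : Set (FreeGroup α)) with hH
  have hgH : g ∈ H := Subgroup.mem_centralizer_iff.mpr (by rintro h rfl; rfl)
  have huH : u ∈ H := Subgroup.mem_centralizer_iff.mpr (by rintro h rfl; exact hu.symm.eq)
  have hvH : v ∈ H := Subgroup.mem_centralizer_iff.mpr (by rintro h rfl; exact hv.symm.eq)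
  set e := IsFreeGroup.toFreeGroup ↥H with he
  have hcomm : ∀ a b : H, a * b = b * a := by
    rintro a b
    rcases subsingleton_or_nontrivial (IsFreeGroup.Generators ↥H) with hS | hS
    · apply e.injective
      rw [_root_.map_mul, _root_.map_mul]
      exact subsingleton_free_comm _ _
    · exfalso
      obtain ⟨s, t, hst⟩ := hS.exists_pair_ne
      set G1 : FreeGroup (IsFreeGroup.Generators ↥H) := e ⟨g, hgH⟩ with hG1
      have hcen : ∀ w : FreeGroup (IsFreeGroup.Generators ↥H), Commute w G1 := by
        intro w
        have h1 : ((e.symm w : H) : FreeGroup α) ∈ H := (e.symm w).2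
        have h2 := Subgroup.mem_centralizer_iff.mp h1 g (by simp)
        have h3 : (e.symm w) * (⟨g, hgH⟩ : H) = ⟨g, hgH⟩ * (e.symm w) := Subtype.ext h2.symm
        have h4 := congrArg e h3
        simp only [_root_.map_mul, MulEquiv.apply_symm_apply] at h4
        exact h4
      have h5 : G1 = 1 :=
        eq_one_of_two_commute hst (hcen (FreeGroup.of s)).symm (hcen (FreeGroup.of t)).symm
      apply hg
      have h6 := e.injective (h5.trans (_root_.map_one e).symm)
      simpa using congrArg Subtype.val h6
  have h7 := hcomm ⟨u, huH⟩ ⟨v, hvH⟩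
  exact congrArg Subtype.val h7

/-- No Baumslag–Solitar relations: `x yⁿ x⁻¹ = yᵐ` forces `x` and `y` to commute. -/
theorem BS_commute {x y : FreeGroup α} {n m : ℤ} (hy : y ≠ 1) (hn : n ≠ 0)
    (hrel : x * y ^ n * x⁻¹ = y ^ m) : Commute x y := by
  classical
  by_contra hxy
  set H := Subgroup.closure ({x, y} : Set (FreeGroup α)) with hH
  have hxH : x ∈ H := Subgroup.subset_closure (by simp)
  have hyH : y ∈ H := Subgroup.subset_closure (by simp)
  set S := IsFreeGroup.Generators ↥H with hS
  set e := IsFreeGroup.toFreeGroup ↥H with he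
  set X := e ⟨x, hxH⟩ with hX
  set Y := e ⟨y, hyH⟩ with hY
  have hrelH : (⟨x, hxH⟩ : H) * (⟨y, hyH⟩ : H) ^ n * (⟨x, hxH⟩ : H)⁻¹ = (⟨y, hyH⟩ : H) ^ m := by
    apply Subtype.ext
    push_cast
    exact hrel
  have hrelF : X * Y ^ n * X⁻¹ = Y ^ m := by
    have h1 := congrArg e hrelH
    simpa [_root_.map_mul, _root_.map_zpow, _root_.map_inv] using h1
  have hY1 : Y ≠ 1 := by
    intro h1
    apply hy
    have h2 := e.injective (h1.trans (_root_.map_one e).symm)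
    simpa using congrArg Subtype.val h2
  have hXY : ¬ Commute X Y := by
    intro h1
    apply hxy
    have h2 : (⟨x, hxH⟩ : H) * ⟨y, hyH⟩ = (⟨y, hyH⟩ : H) * ⟨x, hxH⟩ := by
      apply e.injective
      rw [_root_.map_mul, _root_.map_mul]
      exact h1.eq
    have h3 := congrArg Subtype.val h2
    exact h3
  by_cases hnm : n = m
  · subst hnm
    have hcx : Commute X (Y ^ n) := mul_inv_eq_iff_eq_mul.mp hrelF
    have hcy : Commute Y (Y ^ n) := (Commute.refl Y).zpow_right n
    have hYn : Y ^ n ≠ 1 := tf hY1 hn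
    exact hXY (centralizer_comm hYn hcx hcy)
  · set Φ : FreeGroup S →* Multiplicative (S →₀ ℤ) :=
      FreeGroup.lift fun s => Multiplicative.ofAdd (Finsupp.single s 1) with hΦ
    have hΦY : Φ Y = 1 := by
      have h1 := congrArg Φ hrelF
      simp only [_root_.map_mul, _root_.map_zpow, _root_.map_inv] at h1
      have h3 : Φ X * Φ Y ^ n * (Φ X)⁻¹ = Φ Y ^ n := by
        rw [mul_right_comm]; simp
      have h2 : (Φ Y) ^ n = (Φ Y) ^ m := h3.symm.trans h1
      have h4 := congrArg Multiplicative.toAdd h2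
      rw [toAdd_zpow, toAdd_zpow] at h4
      have h6 : (n - m) • Multiplicative.toAdd (Φ Y) = 0 := by
        rw [sub_smul, h4, sub_self]
      have h5 : Multiplicative.toAdd (Φ Y) = 0 := by
        apply Finsupp.ext
        intro s'
        have h8 := congrArg (fun f => f s') h6
        simp only [Finsupp.smul_apply, Finsupp.coe_zero, Pi.zero_apply, smul_eq_mul] at h8
        rcases mul_eq_zero.mp h8 with h | h
        · exact absurd (sub_eq_zero.mp h) hnm
        · exact h
      have := congrArg Multiplicative.ofAdd h5
      simpa using this
    rcases subsingleton_or_nontrivial S with hSub | hSub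
    · exact hXY (subsingleton_free_comm X Y)
    obtain ⟨s, t, hst⟩ := hSub.exists_pair_ne
    have hgenH : Subgroup.closure ({(⟨x, hxH⟩ : H), (⟨y, hyH⟩ : H)} : Set H) = ⊤ := by
      have hmap : Subgroup.map H.subtype
          (Subgroup.closure ({(⟨x, hxH⟩ : H), (⟨y, hyH⟩ : H)} : Set H)) =
          Subgroup.closure ({x, y} : Set (FreeGroup α)) := by
        rw [MonoidHom.map_closure, Set.image_pair]
        simp
      rw [eq_top_iff]
      rintro ⟨a, ha⟩ _
      have h9 : a ∈ Subgroup.map H.subtype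
          (Subgroup.closure ({(⟨x, hxH⟩ : H), (⟨y, hyH⟩ : H)} : Set H)) := by
        rw [hmap]; exact ha
      obtain ⟨b, hb, hba⟩ := h9
      have h10 : b = ⟨a, ha⟩ := Subtype.ext hba
      exact h10 ▸ hb
    have hgen : ∀ u : FreeGroup S, u ∈ Subgroup.closure ({X, Y} : Set (FreeGroup S)) := by
      intro u
      have h7 : Subgroup.map e.toMonoidHom
          (Subgroup.closure ({(⟨x, hxH⟩ : H), (⟨y, hyH⟩ : H)} : Set H)) =
          Subgroup.closure ({X, Y} : Set (FreeGroup S)) := by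
        rw [MonoidHom.map_closure, Set.image_pair]
        congr 1
      have h8 : (e.symm u : H) ∈ Subgroup.closure
          ({(⟨x, hxH⟩ : H), (⟨y, hyH⟩ : H)} : Set H) := hgenH ▸ Subgroup.mem_top _
      have h9 : u ∈ Subgroup.map e.toMonoidHom
          (Subgroup.closure ({(⟨x, hxH⟩ : H), (⟨y, hyH⟩ : H)} : Set H)) :=
        ⟨e.symm u, h8, by simp⟩
      rwa [h7] at h9
    have hpow : ∀ u : FreeGroup S, ∃ k : ℤ, Φ u = (Φ X) ^ k := by
      intro u
      have hu := hgen u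
      induction hu using Subgroup.closure_induction with
      | mem w hw =>
        rcases hw with rfl | hw
        · exact ⟨1, by rw [zpow_one]⟩
        · rw [Set.mem_singleton_iff] at hw
          subst hw
          exact ⟨0, by rw [hΦY, zpow_zero]⟩
      | one => exact ⟨0, by rw [_root_.map_one, zpow_zero]⟩
      | mul a b ha hb iha ihb =>
        obtain ⟨k, hk⟩ := iha
        obtain ⟨l, hl⟩ := ihb
        exact ⟨k + l, by rw [_root_.map_mul, hk, hl, zpow_add]⟩
      | inv a ha iha =>
        obtain ⟨k, hk⟩ := iha
        exact ⟨-k, by rw [_root_.map_inv, hk, zpow_neg]⟩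
    obtain ⟨k, hk⟩ := hpow (FreeGroup.of s)
    obtain ⟨l, hl⟩ := hpow (FreeGroup.of t)
    have hks : Φ (FreeGroup.of s) = Multiplicative.ofAdd (Finsupp.single s 1) := by
      simp [hΦ]
    have hkt : Φ (FreeGroup.of t) = Multiplicative.ofAdd (Finsupp.single t 1) := by
      simp [hΦ]
    rw [hks] at hk
    rw [hkt] at hl
    have hk' := congrArg Multiplicative.toAdd hk
    have hl' := congrArg Multiplicative.toAdd hl
    rw [toAdd_ofAdd, toAdd_zpow] at hk' hl'
    set f := Multiplicative.toAdd (Φ X) with hf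
    have e1 : (1 : ℤ) = k * f s := by
      have := congrArg (fun g => g s) hk'
      simpa [Finsupp.single_apply] using this
    have e2 : (0 : ℤ) = l * f s := by
      have := congrArg (fun g => g s) hl'
      simpa [Finsupp.single_apply, hst.symm] using this
    have e3 : (1 : ℤ) = l * f t := by
      have := congrArg (fun g => g t) hl'
      simpa [Finsupp.single_apply] using this
    have hfs : f s ≠ 0 := by
      intro h0
      rw [h0, mul_zero] at e1
      exact one_ne_zero e1
    have hl0 : l = 0 := by
      rcases mul_eq_zero.mp e2.symm with h | h
      · exact h
      · exact absurd h hfs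
    rw [hl0, zero_mul] at e3
    exact one_ne_zero e3

end Alg3

section Comb
variable {G : Type*} [Group G]

/-- Conjunction of two zero-exponent-sum equations, via the Malcev equation. -/
def pairW (a x y : G) : G := ⁅x * a * x⁻¹ * (y * a * y⁻¹), a * a⁆

/-- Word detecting triviality. -/
def detW (a b u : G) : G := pairW a ⁅u, a⁆ ⁅u, b⁆

/-- Word expressing the conjunction of two equations. -/
def andW (a b x y : G) : G := pairW a (detW a b x) (detW a b y)

/-- Word expressing the disjunction of two equations. -/
def orW (a b x y : G) : G :=
  andW a b (andW a b ⁅x, y⁆ ⁅x, a * y * a⁻¹⁆) ⁅x, b * y * b⁻¹⁆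

def andFold (a b : G) : List G → G
  | [] => 1
  | x :: l => andW a b x (andFold a b l)

def orFold (a b : G) : List G → G
  | [] => a
  | x :: l => orW a b x (orFold a b l)

variable {H : Type*} [Group H] (φ : G →* H) (a b : G)

theorem map_pairW (x y : G) : φ (pairW a x y) = pairW (φ a) (φ x) (φ y) := by
  simp only [pairW, commutatorElement_def, _root_.map_mul, _root_.map_inv]

theorem map_detW (u : G) : φ (detW a b u) = detW (φ a) (φ b) (φ u) := by
  simp only [detW, map_pairW, commutatorElement_def, _root_.map_mul, _root_.map_inv]

theorem map_andW (x y : G) : φ (andW a b x y) = andW (φ a) (φ b) (φ x) (φ y) := by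
  simp only [andW, map_pairW, map_detW]

theorem map_orW (x y : G) : φ (orW a b x y) = orW (φ a) (φ b) (φ x) (φ y) := by
  simp only [orW, map_andW, commutatorElement_def, _root_.map_mul, _root_.map_inv]

theorem map_andFold (l : List G) :
    φ (andFold a b l) = andFold (φ a) (φ b) (l.map φ) := by
  induction l with
  | nil => simp [andFold]
  | cons x l ih => simp only [andFold, List.map_cons, map_andW, ih]

theorem map_orFold (l : List G) :
    φ (orFold a b l) = orFold (φ a) (φ b) (l.map φ) := by
  induction l with
  | nil => simp [orFold]
  | cons x l ih => simp only [orFold, List.map_cons, map_orW, ih]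

end Comb

section Sem
variable [DecidableEq α] {s t : α}

theorem expSum_conj (s : α) (w u : FreeGroup α) :
    expSum s (w * u * w⁻¹) = expSum s u := by
  rw [_root_.map_mul, _root_.map_mul, _root_.map_inv, mul_right_comm]
  simp

theorem expSum_commutator (s : α) (u v : FreeGroup α) :
    expSum s ⁅u, v⁆ = 1 := by
  rw [map_commutatorElement]
  exact commutatorElement_eq_one_iff_commute.mpr (Commute.all _ _)

theorem of_mul_of_ne_one (s : α) : (of s * of s : FreeGroup α) ≠ 1 := by
  intro h
  have h1 := congrArg (expSum s) h
  rw [_root_.map_mul, expSum_of_self, _root_.map_one (expSum s), ← ofAdd_add] at h1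
  have h2 : (1 : ℤ) + 1 = 0 := Multiplicative.ofAdd.injective h1
  omega

theorem pairW_eq_one {P Q : FreeGroup α}
    (hP : expSum s P = 1) (hQ : expSum s Q = 1) :
    pairW (of s) P Q = 1 ↔ P = 1 ∧ Q = 1 := by
  constructor
  · intro h
    set A := P * of s * P⁻¹ * (Q * of s * Q⁻¹) with hA
    have hc : Commute A (of s * of s) := commutatorElement_eq_one_iff_commute.mp h
    have hφA : expSum s A = Multiplicative.ofAdd 2 := by
      rw [hA, _root_.map_mul, expSum_conj, expSum_conj, expSum_of_self]
      rfl
    have hA1 : A ≠ 1 := by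
      intro h1
      rw [h1, _root_.map_one] at hφA
      have := congrArg Multiplicative.toAdd hφA
      simpa using this
    have hss : (of s * of s : FreeGroup α) ≠ 1 := of_mul_of_ne_one s
    obtain ⟨z, i, j, hzi, hzj⟩ := commute_exists_root hc
    have hz1 : Commute z (of s * of s) := by
      rw [hzj]; exact (Commute.refl z).zpow_right j
    have hz2 : Commute (of s) (of s * of s) := by
      show _ = _
      group
    have hzs : Commute z (of s) := centralizer_comm hss hz1 hz2
    obtain ⟨k, hk⟩ := commute_with_of hzs
    have hAs : A = of s ^ (k * i) := by
      rw [hzi, hk, ← zpow_mul]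
    have hki : k * i = 2 := by
      rw [hAs, expSum_zpow_self] at hφA
      exact Multiplicative.ofAdd.injective hφA
    have hA2 : P * of s * P⁻¹ * (Q * of s * Q⁻¹) = of s * of s := by
      rw [← hA, hAs, hki]
      rw [show (2 : ℤ) = 1 + 1 from rfl, zpow_add, zpow_one]
    have hPs : P * of s * P⁻¹ = of s := key hA2
    have hP1 : P = 1 := by
      have hcom : Commute P (of s) := mul_inv_eq_iff_eq_mul.mp hPs
      obtain ⟨k', hk'⟩ := commute_with_of hcom
      have := hk' ▸ hP
      rw [expSum_zpow_self] at this
      have hk0 : k' = 0 := Multiplicative.ofAdd.injective this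
      rw [hk', hk0, zpow_zero]
    have hQ1 : Q = 1 := by
      rw [hPs] at hA2
      have hQs : Q * of s * Q⁻¹ = of s := mul_left_cancel hA2
      have hcom : Commute Q (of s) := mul_inv_eq_iff_eq_mul.mp hQs
      obtain ⟨k', hk'⟩ := commute_with_of hcom
      have := hk' ▸ hQ
      rw [expSum_zpow_self] at this
      have hk0 : k' = 0 := Multiplicative.ofAdd.injective this
      rw [hk', hk0, zpow_zero]
    exact ⟨hP1, hQ1⟩
  · rintro ⟨rfl, rfl⟩
    simp only [pairW, one_mul, inv_one, mul_one]
    exact commutatorElement_eq_one_iff_commute.mpr (Commute.refl _)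

theorem detW_eq_one (hst : s ≠ t) (u : FreeGroup α) :
    detW (of s) (of t) u = 1 ↔ u = 1 := by
  rw [detW, pairW_eq_one (expSum_commutator s u (of s)) (expSum_commutator s u (of t))]
  constructor
  · rintro ⟨h1, h2⟩
    exact eq_one_of_two_commute hst
      (commutatorElement_eq_one_iff_commute.mp h1)
      (commutatorElement_eq_one_iff_commute.mp h2)
  · rintro rfl
    constructor <;>
      exact commutatorElement_eq_one_iff_commute.mpr (Commute.one_left _)

theorem expSum_detW (s' : α) (u : FreeGroup α) :
    expSum s' (detW (of s) (of t) u) = 1 := by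
  rw [detW, pairW]
  exact expSum_commutator s' _ _

theorem andW_eq_one (hst : s ≠ t) (x y : FreeGroup α) :
    andW (of s) (of t) x y = 1 ↔ x = 1 ∧ y = 1 := by
  rw [andW, pairW_eq_one (expSum_detW s x) (expSum_detW s y),
    detW_eq_one hst, detW_eq_one hst]

theorem orW_eq_one (hst : s ≠ t) (x y : FreeGroup α) :
    orW (of s) (of t) x y = 1 ↔ x = 1 ∨ y = 1 := by
  rw [orW, andW_eq_one hst, andW_eq_one hst]
  constructor
  · rintro ⟨⟨h1, h2⟩, h3⟩
    by_cases hx : x = 1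
    · exact Or.inl hx
    right
    by_contra hy
    have hc1 : Commute x y := commutatorElement_eq_one_iff_commute.mp h1
    have hc2 : Commute x (of s * y * (of s)⁻¹) := commutatorElement_eq_one_iff_commute.mp h2
    have hc3 : Commute x (of t * y * (of t)⁻¹) := commutatorElement_eq_one_iff_commute.mp h3
    have key1 : ∀ c : α, Commute x (of c * y * (of c)⁻¹) → ∃ K : ℤ, y = of c ^ K := by
      intro c hcc
      have hyc : Commute y (of c * y * (of c)⁻¹) :=
        centralizer_comm hx hc1.symm hcc.symm
      obtain ⟨z, i, j, hzi, hzj⟩ := commute_exists_root hyc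
      have hz1 : z ≠ 1 := by
        intro h0
        rw [h0, one_zpow] at hzi
        exact hy hzi
      have hi0 : i ≠ 0 := by
        intro h0
        rw [h0, zpow_zero] at hzi
        exact hy hzi
      have hrel : of c * z ^ i * (of c)⁻¹ = z ^ j := by
        rw [← hzi, ← hzj]
      have hcom : Commute (of c) z := BS_commute hz1 hi0 hrel
      obtain ⟨k, hk⟩ := commute_with_of hcom.symm
      exact ⟨k * i, by rw [hzi, hk, ← zpow_mul]⟩
    obtain ⟨K, hK⟩ := key1 s hc2
    obtain ⟨L, hL⟩ := key1 t hc3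
    have h4 := hK.symm.trans hL
    have h5 := congrArg (expSum s) h4
    rw [expSum_zpow_self, _root_.map_zpow, expSum_of_ne hst.symm, one_zpow] at h5
    have hK0 : K = 0 := by
      have := congrArg Multiplicative.toAdd h5
      simpa using this
    rw [hK0, zpow_zero] at hK
    exact hy hK
  · intro h
    rcases h with rfl | rfl
    · refine ⟨⟨?_, ?_⟩, ?_⟩ <;>
        exact commutatorElement_eq_one_iff_commute.mpr (Commute.one_left _)
    · refine ⟨⟨?_, ?_⟩, ?_⟩ <;>
        · apply commutatorElement_eq_one_iff_commute.mpr
          simp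

theorem andFold_eq_one (hst : s ≠ t) (l : List (FreeGroup α)) :
    andFold (of s) (of t) l = 1 ↔ ∀ x ∈ l, x = 1 := by
  induction l with
  | nil => simp [andFold]
  | cons x l ih =>
    rw [show andFold (of s) (of t) (x :: l) = andW (of s) (of t) x (andFold (of s) (of t) l)
      from rfl, andW_eq_one hst, ih]
    simp

theorem orFold_eq_one (hst : s ≠ t) (l : List (FreeGroup α)) :
    orFold (of s) (of t) l = 1 ↔ ∃ x ∈ l, x = 1 := by
  induction l with
  | nil => simpa [orFold] using of_ne_one s
  | cons x l ih =>
    rw [show orFold (of s) (of t) (x :: l) = orW (of s) (of t) x (orFold (of s) (of t) l)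
      from rfl, orW_eq_one hst, ih]
    simp [eq_comm]

end Sem

end FGMal

/-- In a free group `F = FreeGroup β` of rank at least two (witnessed by two distinct
basis elements `b₁ ≠ b₂`), any finite disjunction of finite conjunctions of equations
`Σᵢⱼ(x̄,ā) = 1` — where each `Σᵢⱼ` is a word in a finite set `X` of variables and in the
basis elements `ā` (i.e. an element of the free group on `X ⊕ β`), evaluated in `F` by
assigning the variables and sending each constant to the corresponding basis element —
is equivalent, in `F`, to a single equation `σ(x̄,ā) = 1`. -/
theorem disjunction_of_conjunctions_eq_one_equation
    {β X : Type*} [Finite X] (b₁ b₂ : β) (hb : b₁ ≠ b₂)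
    (m : ℕ) (mi : Fin m → ℕ) (W : ∀ i : Fin m, Fin (mi i) → FreeGroup (X ⊕ β)) :
    ∃ σ : FreeGroup (X ⊕ β),
      ∀ x : X → FreeGroup β,
        (∃ i, ∀ j, FreeGroup.lift (Sum.elim x FreeGroup.of) (W i j) = 1) ↔
          FreeGroup.lift (Sum.elim x FreeGroup.of) σ = 1 := by
  classical
  set a' : FreeGroup (X ⊕ β) := FreeGroup.of (Sum.inr b₁) with ha'
  set b' : FreeGroup (X ⊕ β) := FreeGroup.of (Sum.inr b₂) with hb'
  refine ⟨FGMal.orFold a' b'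
    (List.ofFn fun i => FGMal.andFold a' b' (List.ofFn fun j => W i j)), ?_⟩
  intro x
  set φ := FreeGroup.lift (Sum.elim x FreeGroup.of) with hφ
  have hφa : φ a' = FreeGroup.of b₁ := by
    rw [ha', hφ, FreeGroup.lift_apply_of, Sum.elim_inr]
  have hφb : φ b' = FreeGroup.of b₂ := by
    rw [hb', hφ, FreeGroup.lift_apply_of, Sum.elim_inr]
  rw [FGMal.map_orFold φ a' b', hφa, hφb, List.map_ofFn]
  have hmain : ∀ i, (φ ∘ fun i => FGMal.andFold a' b' (List.ofFn fun j => W i j)) i =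
      FGMal.andFold (FreeGroup.of b₁) (FreeGroup.of b₂) (List.ofFn fun j => φ (W i j)) := by
    intro i
    show φ (FGMal.andFold a' b' (List.ofFn fun j => W i j)) = _
    rw [FGMal.map_andFold φ a' b', hφa, hφb, List.map_ofFn]
    rfl
  rw [show (List.ofFn (φ ∘ fun i => FGMal.andFold a' b' (List.ofFn fun j => W i j))) =
      List.ofFn (fun i => FGMal.andFold (FreeGroup.of b₁) (FreeGroup.of b₂)
        (List.ofFn fun j => φ (W i j))) from congrArg List.ofFn (funext hmain)]
  rw [FGMal.orFold_eq_one hb]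
  constructor
  · rintro ⟨i, hi⟩
    refine ⟨FGMal.andFold (FreeGroup.of b₁) (FreeGroup.of b₂)
      (List.ofFn fun j => φ (W i j)), ?_, ?_⟩
    · exact List.mem_ofFn.mpr ⟨i, rfl⟩
    · rw [FGMal.andFold_eq_one hb]
      intro u hu
      obtain ⟨j, rfl⟩ := List.mem_ofFn.mp hu
      exact hi j
  · rintro ⟨y, hy, hy1⟩
    obtain ⟨i, hF⟩ := List.mem_ofFn.mp hy
    refine ⟨i, fun j => ?_⟩
    have h2 := (FGMal.andFold_eq_one hb _).mp (hF.trans hy1)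
    exact h2 _ (List.mem_ofFn.mpr ⟨j, rfl⟩)
end
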